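/- Let a, b ∈ ℕⁿ with ∑_{i=1}^n a_i = ∑_{i=1}^n b_i = N, let l_i = min(a_i, b_i) and u_i = max(a_i, b_i), and let P = {x ∈ ℝⁿ : l_i ≤ x_i ≤ u_i for all i, and ∑_{i=1}^n x_i = N}. Two distinct vertices x and y of P are adjacent on the skeleton of P if and only if there exist indices i, j ∈ [n] with i ≠ j such that: y_k = x_k ∈ {l_k, u_k} for all k ∈ [n] with k ≠ i, j; y_j = x_j + δ; and y_i = x_i − δ, where δ = min(u_j − x_j, x_i − l_i). -/

import Mathlib

namespace PaperBox


private def pert {n : ℕ} (m : Fin n → ℝ) (i j : Fin n) (ε : ℝ) : Fin n → ℝ :=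
  fun k => m k + (if k = i then ε else 0) - (if k = j then ε else 0)

private lemma pert_apply_i {n : ℕ} (m : Fin n → ℝ) {i j : Fin n} (hij : i ≠ j) (ε : ℝ) :
    pert m i j ε i = m i + ε := by simp [pert, hij]

private lemma pert_apply_j {n : ℕ} (m : Fin n → ℝ) {i j : Fin n} (hij : i ≠ j) (ε : ℝ) :
    pert m i j ε j = m j - ε := by simp [pert, hij.symm]

private lemma pert_apply_other {n : ℕ} (m : Fin n → ℝ) {i j k : Fin n}
    (hki : k ≠ i) (hkj : k ≠ j) (ε : ℝ) :
    pert m i j ε k = m k := by simp [pert, hki, hkj]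

private lemma pert_sum {n : ℕ} (m : Fin n → ℝ) (i j : Fin n) (ε : ℝ) :
    ∑ k, pert m i j ε k = ∑ k, m k := by
  simp [pert, Finset.sum_add_distrib, Finset.sum_sub_distrib, Finset.sum_ite_eq']

private lemma mid_mem_openSegment {n : ℕ} (m : Fin n → ℝ) (i j : Fin n) (ε : ℝ) :
    m ∈ openSegment ℝ (pert m i j ε) (pert m i j (-ε)) := by
  refine ⟨1/2, 1/2, by norm_num, by norm_num, by norm_num, ?_⟩
  funext k
  simp only [pert, Pi.add_apply, Pi.smul_apply, smul_eq_mul]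
  by_cases h1 : k = i <;> by_cases h2 : k = j <;> simp [h1, h2] <;> first | (split_ifs <;> ring) | ring

private lemma pert_mem {n : ℕ} {l u : Fin n → ℝ} {N : ℝ} {m : Fin n → ℝ}
    (hm : m ∈ {z : Fin n → ℝ | (∀ k, l k ≤ z k ∧ z k ≤ u k) ∧ ∑ k, z k = N})
    {i j : Fin n} (hij : i ≠ j) {ε : ℝ}
    (h1 : l i ≤ m i + ε) (h2 : m i + ε ≤ u i)
    (h3 : l j ≤ m j - ε) (h4 : m j - ε ≤ u j) :
    pert m i j ε ∈ {z : Fin n → ℝ | (∀ k, l k ≤ z k ∧ z k ≤ u k) ∧ ∑ k, z k = N} := by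
  refine ⟨fun k => ?_, by rw [pert_sum]; exact hm.2⟩
  by_cases hki : k = i
  · subst hki; rw [pert_apply_i m hij]; exact ⟨h1, h2⟩
  · by_cases hkj : k = j
    · subst hkj; rw [pert_apply_j m hij]; exact ⟨h3, h4⟩
    · rw [pert_apply_other m hki hkj]; exact hm.1 k

private lemma sum_two {n : ℕ} {p x : Fin n → ℝ} {i j : Fin n} (hij : i ≠ j)
    (h : ∀ k, k ≠ i → k ≠ j → p k = x k) (hs : ∑ k, p k = ∑ k, x k) :
    p i + p j = x i + x j := by
  have h0 : ∑ k, (p k - x k) = 0 := by rw [Finset.sum_sub_distrib, hs]; ring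
  have h1 : ∑ k ∈ ({i, j} : Finset (Fin n)), (p k - x k) = 0 := by
    rw [← h0]
    refine Finset.sum_subset (f := fun k => p k - x k) (Finset.subset_univ ({i, j} : Finset (Fin n)))
      (fun k _ hk => ?_)
    simp only [Finset.mem_insert, Finset.mem_singleton, not_or] at hk
    show p k - x k = 0; rw [h k hk.1 hk.2, sub_self]
  rw [Finset.sum_pair hij] at h1; linarith

private lemma not_two_interior {n : ℕ} {l u : Fin n → ℝ} {N : ℝ}
    {x : Fin n → ℝ}
    (hx : x ∈ Set.extremePoints ℝ {z : Fin n → ℝ | (∀ k, l k ≤ z k ∧ z k ≤ u k) ∧ ∑ k, z k = N})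
    {i j : Fin n} (hij : i ≠ j)
    (h1 : l i < x i) (h2 : x i < u i) (h3 : l j < x j) (h4 : x j < u j) : False := by
  obtain ⟨hxP, hext⟩ := hx
  set ε := min (min (u i - x i) (x i - l i)) (min (u j - x j) (x j - l j)) with hε
  have hε0 : 0 < ε :=
    lt_min (lt_min (by linarith) (by linarith)) (lt_min (by linarith) (by linarith))
  have e1 : ε ≤ u i - x i := le_trans (min_le_left _ _) (min_le_left _ _)
  have e2 : ε ≤ x i - l i := le_trans (min_le_left _ _) (min_le_right _ _)
  have e3 : ε ≤ u j - x j := le_trans (min_le_right _ _) (min_le_left _ _)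
  have e4 : ε ≤ x j - l j := le_trans (min_le_right _ _) (min_le_right _ _)
  have hp := pert_mem hxP hij (ε := ε) (by linarith) (by linarith) (by linarith) (by linarith)
  have hq := pert_mem hxP hij (ε := -ε) (by linarith) (by linarith) (by linarith) (by linarith)
  have h := hext hp hq (mid_mem_openSegment x i j ε)
  have h5 : pert x i j ε i = x i := by rw [h]
  rw [pert_apply_i x hij] at h5; linarith


private lemma tight_combo {c d pk qk lk : ℝ} (hc : 0 < c) (hd : 0 < d) (hcd : c + d = 1)
    (hp : lk ≤ pk) (hq : lk ≤ qk) (hz : c * pk + d * qk = lk) : pk = lk ∧ qk = lk := by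
  have e3 : c * lk + d * lk = lk := by linear_combination lk * hcd
  constructor
  · by_contra hcon
    have hcon' : lk < pk := lt_of_le_of_ne hp (Ne.symm hcon)
    have e1 : c * lk < c * pk := (mul_lt_mul_iff_right₀ hc).2 hcon'
    have e2 : d * lk ≤ d * qk := mul_le_mul_of_nonneg_left hq hd.le
    linarith
  · by_contra hcon
    have hcon' : lk < qk := lt_of_le_of_ne hq (Ne.symm hcon)
    have e1 : d * lk < d * qk := (mul_lt_mul_iff_right₀ hd).2 hcon'
    have e2 : c * lk ≤ c * pk := mul_le_mul_of_nonneg_left hp hc.le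
    linarith

private lemma seg_aux {n : ℕ} {l u : Fin n → ℝ} {N : ℝ} {x y : Fin n → ℝ}
    (hxP : x ∈ {z : Fin n → ℝ | (∀ k, l k ≤ z k ∧ z k ≤ u k) ∧ ∑ k, z k = N})
    (hyP : y ∈ {z : Fin n → ℝ | (∀ k, l k ≤ z k ∧ z k ≤ u k) ∧ ∑ k, z k = N})
    (hext : IsExtreme ℝ {z : Fin n → ℝ | (∀ k, l k ≤ z k ∧ z k ≤ u k) ∧ ∑ k, z k = N}
      (segment ℝ x y))
    {s t w : Fin n} (hst : s ≠ t) (hws : w ≠ s) (hwt : w ≠ t)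
    (hsl : l s < (x s + y s)/2) (hsu : (x s + y s)/2 < u s)
    (htl : l t < (x t + y t)/2) (htu : (x t + y t)/2 < u t)
    (hw : x w ≠ y w) : False := by
  set m : Fin n → ℝ := fun k => (x k + y k)/2 with hm
  have hmk : ∀ k, m k = (x k + y k)/2 := fun k => rfl
  have hmP : m ∈ {z : Fin n → ℝ | (∀ k, l k ≤ z k ∧ z k ≤ u k) ∧ ∑ k, z k = N} := by
    refine ⟨fun k => ?_, ?_⟩
    · have h1 := hxP.1 k; have h2 := hyP.1 k
      rw [hmk k]; constructor <;> linarith [h1.1, h1.2, h2.1, h2.2]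
    · have hsum : ∑ k, m k = (∑ k, x k + ∑ k, y k)/2 := by
        rw [← Finset.sum_add_distrib, ← Finset.sum_div]
      rw [hsum, hxP.2, hyP.2]; ring
  have hmseg : m ∈ segment ℝ x y := by
    refine ⟨1/2, 1/2, by norm_num, by norm_num, by norm_num, ?_⟩
    funext k
    simp only [Pi.add_apply, Pi.smul_apply, smul_eq_mul, hmk]
    ring
  set ε := min (min (u s - m s) (m s - l s)) (min (u t - m t) (m t - l t)) with hε
  have hε0 : 0 < ε := by
    refine lt_min (lt_min ?_ ?_) (lt_min ?_ ?_) <;> rw [hmk] <;> linarith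
  have e1 : ε ≤ u s - m s := le_trans (min_le_left _ _) (min_le_left _ _)
  have e2 : ε ≤ m s - l s := le_trans (min_le_left _ _) (min_le_right _ _)
  have e3 : ε ≤ u t - m t := le_trans (min_le_right _ _) (min_le_left _ _)
  have e4 : ε ≤ m t - l t := le_trans (min_le_right _ _) (min_le_right _ _)
  have hp := pert_mem hmP hst (ε := ε) (by linarith) (by linarith) (by linarith) (by linarith)
  have hq := pert_mem hmP hst (ε := -ε) (by linarith) (by linarith) (by linarith) (by linarith)
  have hseg := (hext.2 hp hq hmseg (mid_mem_openSegment m s t ε))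
  obtain ⟨A, B, hA, hB, hAB, heq⟩ := hseg
  have heqw := congrFun heq w
  have heqs := congrFun heq s
  simp only [Pi.add_apply, Pi.smul_apply, smul_eq_mul] at heqw heqs
  rw [pert_apply_other m hws hwt] at heqw
  rw [pert_apply_i m hst] at heqs
  have key : (A - 1/2) * (x w - y w) = 0 := by
    have hmw := hmk w
    linear_combination heqw + hmw - y w * hAB
  have hA2 : A = 1/2 := by
    rcases mul_eq_zero.mp key with h | h
    · linarith
    · exact absurd (sub_eq_zero.mp h) hw
  have hmsv := hmk s
  rw [hA2] at heqs
  have hB2 : B = 1/2 := by linarith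
  rw [hB2] at heqs
  linarith [heqs, hmsv]

/-- Let `P = {x ∈ ℝⁿ : lᵢ ≤ xᵢ ≤ uᵢ, ∑ xᵢ = N}` where
`lᵢ = min(aᵢ, bᵢ)` and `uᵢ = max(aᵢ, bᵢ)` for `a, b ∈ ℕⁿ` of common coordinate sum `N`.
Two distinct vertices `x, y` of `P` are adjacent on the skeleton of `P` (i.e. the segment
`conv{x,y}` is an extreme subset of `P`) iff there are indices `i ≠ j` such that
`y_k = x_k ∈ {l_k, u_k}` for all `k ≠ i, j`, `y_j = x_j + δ` and `y_i = x_i - δ`, where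
`δ = min(u_j - x_j, x_i - l_i)`. -/
theorem skeleton_adj_iff_flip (n : ℕ) (a b : Fin n → ℕ) (N : ℕ)
    (ha : ∑ i, a i = N) (hb : ∑ i, b i = N)
    (l u : Fin n → ℝ)
    (hl : ∀ i, l i = min (a i : ℝ) (b i : ℝ)) (hu : ∀ i, u i = max (a i : ℝ) (b i : ℝ))
    (P : Set (Fin n → ℝ))
    (hP : P = {x : Fin n → ℝ | (∀ i, l i ≤ x i ∧ x i ≤ u i) ∧ ∑ i, x i = (N : ℝ)})
    (x y : Fin n → ℝ) (hx : x ∈ P.extremePoints ℝ) (hy : y ∈ P.extremePoints ℝ)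
    (hxy : x ≠ y) :
    IsExtreme ℝ P (segment ℝ x y) ↔
      ∃ i j : Fin n, i ≠ j ∧
        (∀ k : Fin n, k ≠ i → k ≠ j → (y k = x k ∧ (x k = l k ∨ x k = u k))) ∧
        y j = x j + min (u j - x j) (x i - l i) ∧
        y i = x i - min (u j - x j) (x i - l i) := by
  subst hP
  have hxP := hx.1
  have hyP := hy.1
  have hmid : ∀ k, x k ≠ y k → l k < (x k + y k)/2 ∧ (x k + y k)/2 < u k := by
    intro k hk
    have h1 := hxP.1 k; have h2 := hyP.1 k
    rcases lt_or_gt_of_ne hk with h | h <;>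
      exact ⟨by linarith [h1.1, h2.1], by linarith [h1.2, h2.2]⟩
  constructor
  · intro hext
    have hsum : ∑ k, x k = ∑ k, y k := by rw [hxP.2, hyP.2]
    have hj : ∃ j, x j < y j := by
      by_contra h
      push_neg at h
      have hne : ∃ k, y k < x k := by
        by_contra h2
        push_neg at h2
        exact hxy (funext fun k => le_antisymm (h2 k) (h k))
      obtain ⟨k0, hk0⟩ := hne
      have := Finset.sum_lt_sum (f := y) (g := x) (fun i _ => h i)
        ⟨k0, Finset.mem_univ k0, hk0⟩
      linarith
    obtain ⟨j, hjlt⟩ := hj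
    have hi : ∃ i, y i < x i := by
      by_contra h
      push_neg at h
      have := Finset.sum_lt_sum (f := x) (g := y) (fun i _ => h i)
        ⟨j, Finset.mem_univ j, hjlt⟩
      linarith
    obtain ⟨i, hilt⟩ := hi
    have hij : i ≠ j := fun h => by subst h; linarith
    have hagree : ∀ k, k ≠ i → k ≠ j → y k = x k := by
      intro k hki hkj
      by_contra hk
      have hxk : x k ≠ y k := fun h => hk h.symm
      have hmi := hmid i hilt.ne'
      have hmk2 := hmid k hxk
      exact seg_aux hxP hyP hext (Ne.symm hki) (Ne.symm hij) (Ne.symm hkj)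
        hmi.1 hmi.2 hmk2.1 hmk2.2 hjlt.ne
    have hbound : ∀ k, k ≠ i → k ≠ j → x k = l k ∨ x k = u k := by
      intro k hki hkj
      by_contra hk
      push_neg at hk
      have h1 := hxP.1 k
      have hlk : l k < x k := lt_of_le_of_ne h1.1 (Ne.symm hk.1)
      have huk : x k < u k := lt_of_le_of_ne h1.2 hk.2
      have hyk : y k = x k := hagree k hki hkj
      have hmi := hmid i hilt.ne'
      exact seg_aux hxP hyP hext hki (Ne.symm hkj) (Ne.symm hij)
        (by rw [hyk]; linarith) (by rw [hyk]; linarith) hmi.1 hmi.2 hjlt.ne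
    have hsum2 : y i + y j = x i + x j := sum_two hij hagree hsum.symm
    have hub1 : y j - x j ≤ u j - x j := by linarith [(hyP.1 j).2]
    have hub2 : y j - x j ≤ x i - l i := by linarith [(hyP.1 i).1]
    have hmin : min (u j - x j) (x i - l i) ≤ y j - x j := by
      by_contra h
      push_neg at h
      have hA : y j - x j < u j - x j := h.trans_le (min_le_left _ _)
      have hB : y j - x j < x i - l i := h.trans_le (min_le_right _ _)
      exact not_two_interior (i := j) (j := i) hy (Ne.symm hij)
        (by linarith [(hxP.1 j).1]) (by linarith)
        (by linarith) (by linarith [(hxP.1 i).2])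
    have hminEq : min (u j - x j) (x i - l i) = y j - x j :=
      le_antisymm hmin (le_min hub1 hub2)
    exact ⟨i, j, hij, fun k hki hkj => ⟨hagree k hki hkj, hbound k hki hkj⟩,
      by linarith, by linarith⟩
  · rintro ⟨i, j, hij, hk, hyj, hyi⟩
    set δ := min (u j - x j) (x i - l i) with hδdef
    have hδ0 : 0 ≤ δ := le_min (by linarith [(hxP.1 j).2]) (by linarith [(hxP.1 i).1])
    have hδpos : 0 < δ := by
      rcases hδ0.lt_or_eq with h | h
      · exact h
      · exfalso; apply hxy; funext k
        by_cases h1 : k = i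
        · subst h1; rw [hyi, ← h]; ring
        · by_cases h2 : k = j
          · subst h2; rw [hyj, ← h]; ring
          · exact ((hk k h1 h2).1).symm
    have hδ1 : δ ≤ u j - x j := min_le_left _ _
    have hδ2 : δ ≤ x i - l i := min_le_right _ _
    have hxj_lt : x j < u j := by linarith
    have hxi_gt : l i < x i := by linarith
    have hkey : x j = l j ∨ x i = u i := by
      by_contra h
      push_neg at h
      exact not_two_interior (i := j) (j := i) hx (Ne.symm hij)
        (lt_of_le_of_ne (hxP.1 j).1 (Ne.symm h.1)) hxj_lt hxi_gt
        (lt_of_le_of_ne (hxP.1 i).2 h.2)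
    have hseg : ∀ r : Fin n → ℝ,
        r ∈ {z : Fin n → ℝ | (∀ k, l k ≤ z k ∧ z k ≤ u k) ∧ ∑ k, z k = (N : ℝ)} →
        (∀ k, k ≠ i → k ≠ j → r k = x k) → r ∈ segment ℝ x y := by
      intro r hrS hrfix
      have hsum2 : r i + r j = x i + x j := sum_two hij hrfix (by rw [hrS.2, hxP.2])
      have hub : r j ≤ x j + δ := by
        have h1 : r j ≤ u j := (hrS.1 j).2
        have h2 : l i ≤ r i := (hrS.1 i).1
        have h3 := le_min (show r j - x j ≤ u j - x j by linarith)
          (show r j - x j ≤ x i - l i by linarith)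
        linarith [h3, hδdef.ge]
      have hlb : x j ≤ r j := by
        rcases hkey with h | h
        · linarith [(hrS.1 j).1]
        · linarith [(hrS.1 i).2]
      have htle : (r j - x j)/δ ≤ 1 := by rw [div_le_one hδpos]; linarith
      have ht0 : 0 ≤ (r j - x j)/δ := div_nonneg (by linarith) hδ0
      refine ⟨1 - (r j - x j)/δ, (r j - x j)/δ, by linarith, ht0, by ring, ?_⟩
      have htδ : (r j - x j)/δ * δ = r j - x j := by field_simp
      funext k
      simp only [Pi.add_apply, Pi.smul_apply, smul_eq_mul]
      by_cases h1 : k = i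
      · subst h1; rw [hyi]; linear_combination (-(1:ℝ)) * htδ - hsum2
      · by_cases h2 : k = j
        · subst h2; rw [hyj]; linear_combination htδ
        · rw [(hk k h1 h2).1, hrfix k h1 h2]; ring
    have hconv : Convex ℝ
        {z : Fin n → ℝ | (∀ k, l k ≤ z k ∧ z k ≤ u k) ∧ ∑ k, z k = (N : ℝ)} := by
      intro p hp q hq A B hA hB hAB
      refine ⟨fun k => ?_, ?_⟩
      · have h1 := hp.1 k; have h2 := hq.1 k
        simp only [Pi.add_apply, Pi.smul_apply, smul_eq_mul]
        have e3 : A * l k + B * l k = l k := by linear_combination (l k) * hAB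
        have e4 : A * u k + B * u k = u k := by linear_combination (u k) * hAB
        have e1 : A * l k ≤ A * p k := mul_le_mul_of_nonneg_left h1.1 hA
        have e2 : B * l k ≤ B * q k := mul_le_mul_of_nonneg_left h2.1 hB
        have e5 : A * p k ≤ A * u k := mul_le_mul_of_nonneg_left h1.2 hA
        have e6 : B * q k ≤ B * u k := mul_le_mul_of_nonneg_left h2.2 hB
        exact ⟨by linarith, by linarith⟩
      · simp only [Pi.add_apply, Pi.smul_apply, smul_eq_mul]
        rw [Finset.sum_add_distrib, ← Finset.mul_sum, ← Finset.mul_sum, hp.2, hq.2]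
        linear_combination (N : ℝ) * hAB
    refine ⟨hconv.segment_subset hxP hyP, ?_⟩
    intro p hp q hq z hz hzo
    obtain ⟨c, d, hc, hd, hcd, hzeq2⟩ := hzo
    obtain ⟨A, B, hA, hB, hAB, hzeq⟩ := hz
    have hfix : ∀ k, k ≠ i → k ≠ j → p k = x k ∧ q k = x k := by
      intro k hki hkj
      obtain ⟨hyk, hbk⟩ := hk k hki hkj
      have hzk : z k = x k := by
        have h := congrFun hzeq k
        simp only [Pi.add_apply, Pi.smul_apply, smul_eq_mul] at h
        rw [hyk] at h
        linear_combination - h + x k * hAB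
      have h1 := hp.1 k; have h2 := hq.1 k
      have hz2 := congrFun hzeq2 k
      simp only [Pi.add_apply, Pi.smul_apply, smul_eq_mul] at hz2
      rw [hzk] at hz2
      rcases hbk with hbk | hbk
      · rw [hbk] at hz2
        obtain ⟨e1, e2⟩ := tight_combo hc hd hcd h1.1 h2.1 hz2
        rw [hbk]
        exact ⟨e1, e2⟩
      · rw [hbk] at hz2
        have h' := tight_combo (pk := -(p k)) (qk := -(q k)) (lk := -(u k)) hc hd hcd
          (neg_le_neg h1.2) (neg_le_neg h2.2) (by linear_combination -hz2)
        rw [hbk]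
        exact ⟨neg_injective h'.1, neg_injective h'.2⟩
    exact hseg p hp (fun k a b => (hfix k a b).1)

end PaperBox
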